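/- Let T be an invertible element of the algebra E of column-finite N×N matrices over F such that T⁻¹ c T − c* ∈ M_∞(F), where c = Σ e_{i+1,i} and c* = Σ e_{i,i+1}. Then a contradiction arises: no such T exists. (Equivalently: if T ∈ E is invertible and cT − Tc* is finitary, then T is not invertible or T is finitary, which is impossible.) -/

import Mathlib

noncomputable section

/-- The algebra `E` of column-finite `ℕ × ℕ` matrices over `F`, realized as the
algebra of all `F`-linear endomorphisms of the free module `⊕_{i ∈ ℕ} F eᵢ`. -/
abbrev EMat (F : Type*) [Field F] := Module.End F (ℕ →₀ F)

/-- The `(i,j)` entry of (the matrix of) an endomorphism `f`. -/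
def entry {F : Type*} [Field F] (f : EMat F) (i j : ℕ) : F :=
  f (Finsupp.single j 1) i

/-- `f` has finitely many nonzero entries in each row. Together with the
automatic column-finiteness this says `f` lies in `E₀`. -/
def RowFinite {F : Type*} [Field F] (f : EMat F) : Prop :=
  ∀ i : ℕ, {j : ℕ | entry f i j ≠ 0}.Finite

/-- `M_∞(F)`: the nonunital algebra of finitary matrices (finitely many
nonzero entries overall), i.e. endomorphisms killing all but finitely many
basis vectors. -/
def Mfin (F : Type*) [Field F] : NonUnitalSubalgebra F (EMat F) where
  carrier := {f | {j : ℕ | f (Finsupp.single j 1) ≠ 0}.Finite}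
  zero_mem' := by
    simp
  add_mem' := by
    intro a b ha hb
    refine ((ha.union hb).subset ?_)
    intro j hj
    simp only [Set.mem_setOf_eq, LinearMap.add_apply] at hj ⊢
    by_contra h
    try push_neg at h
    simp only [Set.mem_union, Set.mem_setOf_eq, not_or, not_not] at h
    rw [h.1, h.2, add_zero] at hj
    exact hj rfl
  mul_mem' := by
    intro a b ha hb
    refine hb.subset ?_
    intro j hj
    simp only [Set.mem_setOf_eq] at hj ⊢
    intro h
    apply hj
    show a (b (Finsupp.single j 1)) = 0
    rw [h]
    simp
  smul_mem' := by
    intro c a ha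
    refine ha.subset ?_
    intro j hj
    simp only [Set.mem_setOf_eq, LinearMap.smul_apply] at hj ⊢
    intro h
    rw [h] at hj
    simp at hj

instance (F : Type*) [Field F] : NonUnitalRing (Mfin F) :=
  NonUnitalSubalgebra.toNonUnitalRing (R := F) (A := EMat F) (Mfin F)

/-- The shift `c = Σ_{i} e_{i+1,i}` (sends basis vector `eᵢ` to `e_{i+1}`). -/
def cSh (F : Type*) [Field F] : EMat F :=
  Finsupp.lsum F fun i => Finsupp.lsingle (i + 1)

/-- The shift `c* = Σ_{i} e_{i,i+1}` (sends `e_{i+1}` to `eᵢ` and `e₀` to `0`). -/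
def cShStar (F : Type*) [Field F] : EMat F :=
  Finsupp.lsum F fun i => if i = 0 then 0 else Finsupp.lsingle (i - 1)



lemma cSh_eq (F : Type*) [Field F] :
    cSh F = Finsupp.lmapDomain F F (· + 1) := by
  apply Finsupp.lhom_ext
  intro j a
  simp [cSh, Finsupp.mapDomain_single]

lemma cSh_apply_zero {F : Type*} [Field F] (v : ℕ →₀ F) : cSh F v 0 = 0 := by
  rw [cSh_eq]
  exact Finsupp.mapDomain_notin_range _ _ (by rintro ⟨x, hx⟩; exact Nat.succ_ne_zero x hx)

lemma cSh_apply_succ {F : Type*} [Field F] (v : ℕ →₀ F) (i : ℕ) :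
    cSh F v (i + 1) = v i := by
  rw [cSh_eq]
  exact Finsupp.mapDomain_apply (add_left_injective 1) v i

lemma cSh_pow_apply_lt {F : Type*} [Field F] (k : ℕ) (v : ℕ →₀ F) (i : ℕ)
    (hik : i < k) : ((cSh F) ^ k) v i = 0 := by
  induction k generalizing v i with
  | zero => omega
  | succ k ih =>
    rw [pow_succ', Module.End.mul_apply]
    cases i with
    | zero => exact cSh_apply_zero _
    | succ m =>
      rw [cSh_apply_succ]
      exact ih v m (by omega)

lemma cShStar_single_succ {F : Type*} [Field F] (j : ℕ) :
    cShStar F (Finsupp.single (j + 1) (1 : F)) = Finsupp.single j 1 := by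
  simp [cShStar]

/-- There is no invertible `T` in the algebra `E` of column-finite matrices
with `T⁻¹ c T − c* ∈ M_∞(F)`. -/
theorem no_conjugation_c_to_cstar (F : Type*) [Field F] (T S : EMat F)
    (hTS : T * S = 1) (hST : S * T = 1)
    (hconj : S * cSh F * T - cShStar F ∈ Mfin F) : False := by
  have hfin : {j : ℕ | (S * cSh F * T - cShStar F) (Finsupp.single j 1) ≠ 0}.Finite :=
    hconj
  obtain ⟨b, hb⟩ := hfin.bddAbove
  have hzero : ∀ j, b < j → (S * cSh F * T - cShStar F) (Finsupp.single j 1) = 0 := by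
    intro j hj
    by_contra h
    exact absurd (hb h) (by omega)
  -- key relation: c T e_{j} = T e_{j-1} for j > b
  have hrel : ∀ k : ℕ, cSh F (T (Finsupp.single (b + k + 1) 1)) =
      T (Finsupp.single (b + k) 1) := by
    intro k
    have h := hzero (b + k + 1) (by omega)
    rw [LinearMap.sub_apply, sub_eq_zero] at h
    have h2 : S (cSh F (T (Finsupp.single (b + k + 1) 1))) = Finsupp.single (b + k) 1 := by
      have := h
      simp only [Module.End.mul_apply] at this
      rw [this, cShStar_single_succ]
    calc cSh F (T (Finsupp.single (b + k + 1) 1))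
        = (T * S) (cSh F (T (Finsupp.single (b + k + 1) 1))) := by
          rw [hTS]; rfl
      _ = T (S (cSh F (T (Finsupp.single (b + k + 1) 1)))) := rfl
      _ = T (Finsupp.single (b + k) 1) := by rw [h2]
  -- iterate: T e_b = c^k (T e_{b+k})
  have hiter : ∀ k : ℕ, ((cSh F) ^ k) (T (Finsupp.single (b + k) 1)) =
      T (Finsupp.single b 1) := by
    intro k
    induction k with
    | zero => simp
    | succ k ih =>
      have e : b + (k + 1) = b + k + 1 := rfl
      rw [pow_succ, Module.End.mul_apply, e, hrel k, ih]
  have hTb : T (Finsupp.single b (1 : F)) = 0 := by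
    ext i
    rw [← hiter (i + 1)]
    exact cSh_pow_apply_lt _ _ _ (by omega)
  have : (Finsupp.single b (1 : F)) = 0 := by
    calc Finsupp.single b (1 : F) = (S * T) (Finsupp.single b 1) := by rw [hST]; rfl
      _ = S (T (Finsupp.single b 1)) := rfl
      _ = 0 := by rw [hTb]; simp
  exact one_ne_zero (Finsupp.single_eq_zero.mp this)

end
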